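/- For x, y, z ∈ ℝ² forming a triangle with the origin in its convex hull (all three nonzero), at least one of the three angles at the origin, ∠(x,0,y), ∠(y,0,z), ∠(z,0,x), is at least 2π/3. -/

import Mathlib

set_option maxHeartbeats 1000000

open InnerProductGeometry Real

lemma inner_gt_of_angle_lt {V : Type*} [NormedAddCommGroup V] [InnerProductSpace ℝ V]
    (x y : V) (hx : x ≠ 0) (hy : y ≠ 0)
    (h : InnerProductGeometry.angle x y < 2 * Real.pi / 3) :
    -((‖x‖ * ‖y‖) / 2) < (inner ℝ x y : ℝ) := by
  have hcos : Real.cos (2 * Real.pi / 3) < Real.cos (InnerProductGeometry.angle x y) := by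
    refine Real.strictAntiOn_cos ⟨angle_nonneg x y, angle_le_pi x y⟩ ⟨?_, ?_⟩ h
    · nlinarith [Real.pi_pos]
    · nlinarith [Real.pi_pos]
  have h23 : Real.cos (2 * Real.pi / 3) = -(1/2) := by
    have : 2 * Real.pi / 3 = Real.pi - Real.pi / 3 := by ring
    rw [this, Real.cos_pi_sub, Real.cos_pi_div_three]
  rw [h23, InnerProductGeometry.cos_angle] at hcos
  have hxy : 0 < ‖x‖ * ‖y‖ := by
    have := norm_pos_iff.mpr hx
    have := norm_pos_iff.mpr hy
    positivity
  rw [lt_div_iff₀ hxy] at hcos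
  nlinarith

lemma key_contradiction {V : Type*} [NormedAddCommGroup V] [InnerProductSpace ℝ V]
    (x y z : V) (hx : x ≠ 0) (hy : y ≠ 0) (hz : z ≠ 0)
    (hP : -((‖x‖ * ‖y‖) / 2) < (inner ℝ x y : ℝ))
    (hQ : -((‖y‖ * ‖z‖) / 2) < (inner ℝ y z : ℝ))
    (hR : -((‖z‖ * ‖x‖) / 2) < (inner ℝ z x : ℝ))
    (a b c : ℝ) (ha : 0 ≤ a) (hb : 0 ≤ b) (hc : 0 ≤ c)
    (habc : a + b + c = 1) (hsum : a • x + b • y + c • z = 0) : False := by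
  have hnx : (0:ℝ) < ‖x‖ := norm_pos_iff.mpr hx
  have hny : (0:ℝ) < ‖y‖ := norm_pos_iff.mpr hy
  have hnz : (0:ℝ) < ‖z‖ := norm_pos_iff.mpr hz
  have hexp : a^2 * ‖x‖^2 + b^2 * ‖y‖^2 + c^2 * ‖z‖^2
      + 2*a*b*(inner ℝ x y : ℝ) + 2*b*c*(inner ℝ y z : ℝ) + 2*c*a*(inner ℝ z x : ℝ) = 0 := by
    have h1 : (inner ℝ (a • x + b • y + c • z) (a • x + b • y + c • z) : ℝ) = 0 := by
      rw [hsum]; simp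
    simp only [inner_add_left, inner_add_right, real_inner_smul_left,
      real_inner_smul_right, real_inner_self_eq_norm_sq] at h1
    have e1 : ‖a • x‖^2 = a^2 * ‖x‖^2 := by rw [norm_smul]; simp [mul_pow, sq_abs]
    have e2 : ‖b • y‖^2 = b^2 * ‖y‖^2 := by rw [norm_smul]; simp [mul_pow, sq_abs]
    have e3 : ‖c • z‖^2 = c^2 * ‖z‖^2 := by rw [norm_smul]; simp [mul_pow, sq_abs]
    linear_combination h1 - e1 - e2 - e3 - (a*b) * (real_inner_comm x y)
      - (b*c) * (real_inner_comm y z) - (c*a) * (real_inner_comm z x)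
  rcases ha.eq_or_lt with ha0 | ha0
  · rcases hb.eq_or_lt with hb0 | hb0
    · have hc1 : c = 1 := by linarith
      subst hc1; rw [← ha0, ← hb0] at hexp; nlinarith
    rcases hc.eq_or_lt with hc0 | hc0
    · rw [← ha0, ← hc0] at hexp
      have hb1 : b = 1 := by linarith
      subst hb1; nlinarith
    · rw [← ha0] at hexp
      nlinarith [mul_pos hb0 hc0, sq_nonneg (b*‖y‖ - c*‖z‖),
        mul_pos (mul_pos hb0 hny) (mul_pos hc0 hnz)]
  rcases hb.eq_or_lt with hb0 | hb0
  · rcases hc.eq_or_lt with hc0 | hc0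
    · rw [← hb0, ← hc0] at hexp
      have ha1 : a = 1 := by linarith
      subst ha1; nlinarith
    · rw [← hb0] at hexp
      nlinarith [mul_pos hc0 ha0, sq_nonneg (c*‖z‖ - a*‖x‖),
        mul_pos (mul_pos hc0 hnz) (mul_pos ha0 hnx)]
  rcases hc.eq_or_lt with hc0 | hc0
  · rw [← hc0] at hexp
    nlinarith [mul_pos ha0 hb0, sq_nonneg (a*‖x‖ - b*‖y‖),
      mul_pos (mul_pos ha0 hnx) (mul_pos hb0 hny)]
  · nlinarith [sq_nonneg (a*‖x‖ - b*‖y‖), sq_nonneg (b*‖y‖ - c*‖z‖), sq_nonneg (c*‖z‖ - a*‖x‖),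
      mul_pos ha0 hb0, mul_pos hb0 hc0, mul_pos hc0 ha0,
      mul_pos (mul_pos ha0 hb0) (mul_pos hnx hny),
      mul_pos (mul_pos hb0 hc0) (mul_pos hny hnz),
      mul_pos (mul_pos hc0 ha0) (mul_pos hnz hnx)]

theorem exists_angle_ge_two_pi_div_three
    (x y z : EuclideanSpace ℝ (Fin 2))
    (hx : x ≠ 0) (hy : y ≠ 0) (hz : z ≠ 0)
    (hindep : AffineIndependent ℝ ![x, y, z])
    (h0 : (0 : EuclideanSpace ℝ (Fin 2)) ∈ convexHull ℝ {x, y, z}) :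
    2 * Real.pi / 3 ≤ InnerProductGeometry.angle x y ∨
    2 * Real.pi / 3 ≤ InnerProductGeometry.angle y z ∨
    2 * Real.pi / 3 ≤ InnerProductGeometry.angle z x := by
  by_contra hcon
  push_neg at hcon
  obtain ⟨hxy, hyz, hzx⟩ := hcon
  have hP := inner_gt_of_angle_lt x y hx hy hxy
  have hQ := inner_gt_of_angle_lt y z hy hz hyz
  have hR := inner_gt_of_angle_lt z x hz hx hzx
  rw [show ({x, y, z} : Set (EuclideanSpace ℝ (Fin 2))) = insert x {y, z} from rfl,
    convexHull_insert ⟨y, by simp⟩, mem_convexJoin] at h0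
  obtain ⟨x', hx', w, hw, hseg⟩ := h0
  rw [Set.mem_singleton_iff] at hx'
  rw [show x' = x from hx'] at hseg
  rw [convexHull_pair] at hw
  obtain ⟨s₁, s₂, hs₁, hs₂, hs, rfl⟩ := hw
  obtain ⟨t₁, t₂, ht₁, ht₂, ht, heq⟩ := hseg
  refine key_contradiction x y z hx hy hz hP hQ hR t₁ (t₂ * s₁) (t₂ * s₂)
    ht₁ (mul_nonneg ht₂ hs₁) (mul_nonneg ht₂ hs₂) (by nlinarith) ?_
  rw [smul_add, smul_smul, smul_smul, ← add_assoc] at heq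
  exact heq
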